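/- arXiv:2604.17777 — 2 statements merged into one kernel-verified Lean document; each statement's English description precedes it below -/
import Mathlib

section
/- Let n ≥ 3 and 0 ≤ k ≤ n - 2. Then a_n^{-k} E_{2,1} a_n^{k} = E_{k+2, k+1}, and hence a_n^{-k} b_n a_n^{k} = I_n + E_{k+2,k+1} = T_{k+2,k+1}. -/
open Matrix

/-- The `n × n` integer matrix unit `E_{i,j}`, with 1-based indices `i, j ∈ {1, …, n}`:
its `(r,s)` entry (0-based) is `1` when `r + 1 = i` and `s + 1 = j`, and `0` otherwise. -/
def matUnit (n i j : ℕ) : Matrix (Fin n) (Fin n) ℤ :=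
  Matrix.of fun r s => if r.val + 1 = i ∧ s.val + 1 = j then 1 else 0

/-- The elementary transvection `T_{i,j} = I_n + E_{i,j}` (1-based indices). -/
def Tmat (n i j : ℕ) : Matrix (Fin n) (Fin n) ℤ :=
  1 + matUnit n i j

/-- The sign `ε_n = (-1)^(n-1)`. -/
def eps (n : ℕ) : ℤ := (-1) ^ (n - 1)

/-- `a_n = Σ_{i=1}^{n-1} E_{i,i+1} + ε_n E_{n,1}`. -/
def aMat (n : ℕ) : Matrix (Fin n) (Fin n) ℤ :=
  (∑ i ∈ Finset.range (n - 1), matUnit n (i + 1) (i + 2)) + eps n • matUnit n n 1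

/-- `b_n = I_n + E_{2,1}`. -/
def bMat (n : ℕ) : Matrix (Fin n) (Fin n) ℤ :=
  1 + matUnit n 2 1

def cMat (n : ℕ) : Matrix (Fin n) (Fin n) ℤ :=
  (∑ i ∈ Finset.range (n - 1), matUnit n (i + 2) (i + 1)) + eps n • matUnit n 1 n

lemma eps_sq (n : ℕ) : eps n * eps n = 1 := by
  unfold eps; rw [← mul_pow]; norm_num

lemma aMat_apply (n : ℕ) (r s : Fin n) :
    aMat n r s = if s.val = r.val + 1 then 1
      else if r.val + 1 = n ∧ s.val = 0 then eps n else 0 := by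
  unfold aMat matUnit
  simp only [Matrix.add_apply, Matrix.smul_apply, Matrix.sum_apply, Matrix.of_apply,
    smul_ite, smul_eq_mul, mul_one, mul_zero]
  by_cases h : s.val = r.val + 1
  · rw [if_pos h, Finset.sum_eq_single r.val]
    · have hr : ¬ (r.val + 1 = n ∧ s.val + 1 = 1) := by omega
      rw [if_pos ⟨rfl, by omega⟩, if_neg hr]; ring
    · intro i _ hi; rw [if_neg (by omega)]
    · intro hmem
      exfalso; apply hmem; rw [Finset.mem_range]
      have := s.isLt; omega
  · rw [if_neg h, Finset.sum_eq_zero fun i _ => if_neg (by omega)]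
    by_cases h2 : r.val + 1 = n ∧ s.val = 0
    · rw [if_pos h2, if_pos ⟨h2.1, by omega⟩]; ring
    · rw [if_neg h2, if_neg (by omega)]; ring

lemma cMat_apply (n : ℕ) (r s : Fin n) :
    cMat n r s = if r.val = s.val + 1 then 1
      else if r.val = 0 ∧ s.val + 1 = n then eps n else 0 := by
  unfold cMat matUnit
  simp only [Matrix.add_apply, Matrix.smul_apply, Matrix.sum_apply, Matrix.of_apply,
    smul_ite, smul_eq_mul, mul_one, mul_zero]
  by_cases h : r.val = s.val + 1
  · rw [if_pos h, Finset.sum_eq_single s.val]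
    · have hr : ¬ (r.val + 1 = 1 ∧ s.val + 1 = n) := by omega
      rw [if_pos ⟨by omega, rfl⟩, if_neg hr]; ring
    · intro i _ hi; rw [if_neg (by omega)]
    · intro hmem
      exfalso; apply hmem; rw [Finset.mem_range]
      have := r.isLt; omega
  · rw [if_neg h, Finset.sum_eq_zero fun i _ => if_neg (by omega)]
    by_cases h2 : r.val = 0 ∧ s.val + 1 = n
    · rw [if_pos h2, if_pos ⟨by omega, h2.2⟩]; ring
    · rw [if_neg h2, if_neg (by omega)]; ring

lemma cMat_mul_aMat (n : ℕ) (hn : 3 ≤ n) : cMat n * aMat n = 1 := by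
  ext r s
  rw [Matrix.mul_apply, Matrix.one_apply]
  by_cases hr : r.val = 0
  · rw [Finset.sum_eq_single (⟨n - 1, by omega⟩ : Fin n)]
    · rw [cMat_apply, aMat_apply]
      simp only [Fin.ext_iff]
      rw [if_neg (by omega), if_pos ⟨hr, by omega⟩, if_neg (by omega)]
      by_cases hs : s.val = 0
      · rw [if_pos (by omega), if_pos (by omega : r.val = s.val)]
        exact eps_sq n
      · rw [if_neg (by omega), if_neg (by omega : ¬ r.val = s.val)]
        ring
    · intro t _ ht
      have ht' : t.val ≠ n - 1 := fun h => ht (Fin.ext h)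
      rw [cMat_apply]
      rw [if_neg (by omega), if_neg (by omega)]
      ring
    · intro h; exact absurd (Finset.mem_univ _) h
  · rw [Finset.sum_eq_single (⟨r.val - 1, by omega⟩ : Fin n)]
    · rw [cMat_apply, aMat_apply]
      simp only [Fin.ext_iff]
      rw [if_pos (by omega)]
      by_cases hs : s.val = r.val
      · rw [if_pos (by omega), if_pos (by omega : r.val = s.val)]; ring
      · rw [if_neg (by omega), if_neg (by omega), if_neg (by omega : ¬ r.val = s.val)]
        ring
    · intro t _ ht
      have ht' : t.val ≠ r.val - 1 := fun h => ht (Fin.ext h)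
      rw [cMat_apply]
      rw [if_neg (by omega), if_neg (by omega)]
      ring
    · intro h; exact absurd (Finset.mem_univ _) h

lemma cMat_mul_unit (n k : ℕ) (hk : k + 2 ≤ n - 1) :
    cMat n * matUnit n (k + 2) (k + 1) = matUnit n (k + 3) (k + 1) := by
  have hn : k + 2 < n := by omega
  ext r s
  rw [Matrix.mul_apply]
  unfold matUnit
  simp only [Matrix.of_apply]
  rw [Finset.sum_eq_single (⟨k + 1, by omega⟩ : Fin n)]
  · rw [cMat_apply]
    simp only [Fin.ext_iff, Fin.val_mk, true_and, and_true]
    split_ifs <;> first | ring1 | omega | (exfalso; omega)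
  · intro t _ ht
    have ht' : t.val ≠ k + 1 := fun h => ht (Fin.ext h)
    rw [if_neg (by omega)]; ring
  · intro h; exact absurd (Finset.mem_univ _) h

lemma unit_mul_aMat (n k : ℕ) (hk : k + 2 ≤ n - 1) :
    matUnit n (k + 3) (k + 1) * aMat n = matUnit n (k + 3) (k + 2) := by
  have hn : k + 2 < n := by omega
  ext r s
  rw [Matrix.mul_apply]
  unfold matUnit
  simp only [Matrix.of_apply]
  rw [Finset.sum_eq_single (⟨k, by omega⟩ : Fin n)]
  · rw [aMat_apply]
    simp only [Fin.ext_iff, Fin.val_mk, true_and, and_true]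
    split_ifs <;> first | ring1 | omega | (exfalso; omega)
  · intro t _ ht
    have ht' : t.val ≠ k := fun h => ht (Fin.ext h)
    rw [if_neg (by omega)]; ring
  · intro h; exact absurd (Finset.mem_univ _) h

lemma cMat_pow_mul_aMat_pow (n : ℕ) (hn : 3 ≤ n) (k : ℕ) :
    cMat n ^ k * aMat n ^ k = 1 := by
  induction k with
  | zero => simp
  | succ k ih =>
    rw [pow_succ, pow_succ']
    calc cMat n ^ k * cMat n * (aMat n * aMat n ^ k)
        = cMat n ^ k * (cMat n * aMat n) * aMat n ^ k := by
          simp only [mul_assoc]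
      _ = 1 := by rw [cMat_mul_aMat n hn, mul_one, ih]

lemma key_conj (n : ℕ) (hn : 3 ≤ n) (k : ℕ) (hk : k ≤ n - 2) :
    cMat n ^ k * matUnit n 2 1 * aMat n ^ k = matUnit n (k + 2) (k + 1) := by
  induction k with
  | zero => simp
  | succ k ih =>
    have hk' : k + 2 ≤ n - 1 := by omega
    have ih' := ih (by omega)
    rw [pow_succ', pow_succ]
    calc cMat n * cMat n ^ k * matUnit n 2 1 * (aMat n ^ k * aMat n)
        = cMat n * (cMat n ^ k * matUnit n 2 1 * aMat n ^ k) * aMat n := by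
          simp only [mul_assoc]
      _ = cMat n * matUnit n (k + 2) (k + 1) * aMat n := by rw [ih']
      _ = matUnit n (k + 3) (k + 1) * aMat n := by rw [cMat_mul_unit n k hk']
      _ = matUnit n (k + 3) (k + 2) := unit_mul_aMat n k hk' 

/-- For `n ≥ 3` and `0 ≤ k ≤ n - 2`, one has
`a_n^{-k} E_{2,1} a_n^{k} = E_{k+2, k+1}`, and hence
`a_n^{-k} b_n a_n^{k} = I_n + E_{k+2,k+1} = T_{k+2,k+1}`. -/
theorem aMat_conj_basic_transvection (n : ℕ) (hn : 3 ≤ n) (k : ℕ) (hk : k ≤ n - 2) :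
    ((aMat n)⁻¹) ^ k * matUnit n 2 1 * (aMat n) ^ k = matUnit n (k + 2) (k + 1) ∧
    ((aMat n)⁻¹) ^ k * bMat n * (aMat n) ^ k = 1 + matUnit n (k + 2) (k + 1) ∧
    ((aMat n)⁻¹) ^ k * bMat n * (aMat n) ^ k = Tmat n (k + 2) (k + 1) := by
  have hinv : (aMat n)⁻¹ = cMat n := Matrix.inv_eq_left_inv (cMat_mul_aMat n hn)
  have h1 : ((aMat n)⁻¹) ^ k * matUnit n 2 1 * (aMat n) ^ k = matUnit n (k + 2) (k + 1) := by
    rw [hinv]; exact key_conj n hn k hk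
  refine ⟨h1, ?_, ?_⟩
  · rw [bMat, mul_add, mul_one, add_mul, h1, hinv, cMat_pow_mul_aMat_pow n hn]
  · rw [Tmat, bMat, mul_add, mul_one, add_mul, h1, hinv, cMat_pow_mul_aMat_pow n hn]
end

section
/- For every n ≥ 3, the pair (a_n, b_n) generates SL_n(ℤ): the subgroup of SL_n(ℤ) generated by {a_n, b_n} is the whole group. In particular, every elementary transvection T_{i,j} (i ≠ j) lies in the subgroup generated by a_n and b_n. -/
open Matrix

namespace SLGen
variable {n : ℕ}
abbrev SLn (n : ℕ) := Matrix.SpecialLinearGroup (Fin n) ℤ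

theorem natAbs_emod_lt' (a b : ℤ) (hb : b ≠ 0) : (a % b).natAbs < b.natAbs := by
  have h1 := Int.emod_nonneg a hb
  rcases hb.lt_or_gt with h | h
  · have h2 := Int.emod_lt_of_pos a (neg_pos.mpr h)
    rw [Int.emod_neg] at h2
    omega
  · have h2 := Int.emod_lt_of_pos a h
    omega

def mkT (i j : Fin n) (h : i ≠ j) (c : ℤ) : SLn n :=
  ⟨transvection i j c, det_transvection_of_ne i j h c⟩

@[simp] theorem mkT_coe (i j : Fin n) (h : i ≠ j) (c : ℤ) :
    (mkT i j h c : Matrix (Fin n) (Fin n) ℤ) = transvection i j c := rfl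

theorem mkT_mul (i j : Fin n) (h : i ≠ j) (c d : ℤ) :
    mkT i j h c * mkT i j h d = mkT i j h (c + d) := by
  apply Subtype.ext
  simp [transvection_mul_transvection_same i j h]

theorem mkT_zero (i j : Fin n) (h : i ≠ j) : mkT i j h 0 = 1 := by
  apply Subtype.ext; simp [mkT]

theorem mkT_inv (i j : Fin n) (h : i ≠ j) (c : ℤ) : (mkT i j h c)⁻¹ = mkT i j h (-c) := by
  symm
  apply eq_inv_of_mul_eq_one_left
  rw [mkT_mul]; simp [mkT_zero]

/-- invariant: the first `k` rows and columns of `M` agree with the identity -/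
def Qk (k : ℕ) (M : SLn n) : Prop :=
  ∀ i j : Fin n, (i.val < k ∨ j.val < k) →
    (M : Matrix (Fin n) (Fin n) ℤ) i j = if i = j then 1 else 0

theorem Qk_mul (k : ℕ) (i j : Fin n) (h : i ≠ j) (hi : k ≤ i.val) (hj : k ≤ j.val)
    (c : ℤ) (M : SLn n) (hQ : Qk k M) : Qk k (mkT i j h c * M) := by
  intro a b hab
  rw [Matrix.SpecialLinearGroup.coe_mul, mkT_coe]
  by_cases ha : a = i
  · subst ha
    have hb : b.val < k := by rcases hab with h' | h' <;> omega
    rw [transvection_mul_apply_same]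
    have h1 : (M : Matrix (Fin n) (Fin n) ℤ) a b = 0 := by
      rw [hQ a b (Or.inr hb)]
      have : a ≠ b := by intro e; subst e; omega
      simp [this]
    have h2 : (M : Matrix (Fin n) (Fin n) ℤ) j b = 0 := by
      rw [hQ j b (Or.inr hb)]
      have : j ≠ b := by intro e; subst e; omega
      simp [this]
    rw [h1, h2]
    have : a ≠ b := by intro e; subst e; omega
    simp [this]
  · rw [transvection_mul_apply_of_ne i j a b ha]
    exact hQ a b hab

theorem mem_of_mul_left {G : Subgroup (SLn n)} {t M : SLn n} (ht : t ∈ G) (h : t * M ∈ G) :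
    M ∈ G := by
  have := mul_mem (inv_mem ht) h
  rwa [inv_mul_cancel_left] at this

theorem mem_of_mul_right {G : Subgroup (SLn n)} {t M : SLn n} (ht : t ∈ G) (h : M * t ∈ G) :
    M ∈ G := by
  have := mul_mem h (inv_mem ht)
  rwa [mul_inv_cancel_right] at this

theorem det_mem_span (M : Matrix (Fin n) (Fin n) ℤ) (K : Fin n)
    (hrows : ∀ i : Fin n, i.val < K.val → ∀ j, M i j = if i = j then 1 else 0) :
    M.det ∈ Ideal.span ((fun r => M r K) '' {r : Fin n | K.val ≤ r.val}) := by
  rw [Matrix.det_apply]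
  refine Submodule.sum_mem _ fun σ _ => ?_
  rw [Units.smul_def]
  refine Ideal.mul_mem_left _ _ ?_
  rw [← Finset.mul_prod_erase Finset.univ _ (Finset.mem_univ K)]
  rcases lt_or_ge (σ K).val K.val with h | h
  · have h0 : M (σ K) K = 0 := by
      rw [hrows _ h]
      have : σ K ≠ K := by intro e; rw [e] at h; omega
      simp [this]
    rw [h0, zero_mul]
    exact Ideal.zero_mem _
  · exact Ideal.mul_mem_right _ _ (Ideal.subset_span ⟨σ K, h, rfl⟩)

end SLGen

namespace SLGen
variable {n : ℕ}

set_option maxHeartbeats 1000000 in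
theorem mem_of_transvections (G : Subgroup (SLn n))
    (hT : ∀ (i j : Fin n) (h : i ≠ j) (c : ℤ), mkT i j h c ∈ G) (M : SLn n) : M ∈ G := by
  suffices H : ∀ d k, k + d = n → ∀ M : SLn n, Qk k M → M ∈ G by
    refine H n 0 (by omega) M fun i j hij => absurd hij (by omega)
  intro d
  induction d with
  | zero =>
    intro k hk M hQ
    have hM : M = 1 := by
      apply Subtype.ext
      ext i j
      have := hQ i j (Or.inl (by omega))
      rw [this]
      simp [Matrix.one_apply]
    rw [hM]; exact one_mem G
  | succ d ih =>
    intro k hk M₀ hQ₀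
    have hkn : k < n := by omega
    set K : Fin n := ⟨k, hkn⟩ with hKdef
    have hKval : K.val = k := rfl
    -- Phase 2: clear row K, assuming column K is e_K
    have clearRow : ∀ m : ℕ, ∀ M : SLn n, Qk k M →
        (∀ i : Fin n, (M : Matrix (Fin n) (Fin n) ℤ) i K = if i = K then 1 else 0) →
        (Finset.univ.filter fun j : Fin n =>
          k < j.val ∧ (M : Matrix (Fin n) (Fin n) ℤ) K j ≠ 0).card ≤ m →
        M ∈ G := by
      intro m
      induction m with
      | zero =>
        intro M hQ hcol hcard
        refine ih (k + 1) (by omega) M ?_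
        have hempty : ∀ j : Fin n, k < j.val → (M : Matrix (Fin n) (Fin n) ℤ) K j = 0 := by
          intro j hj
          by_contra h0
          have hmem : j ∈ Finset.univ.filter (fun j : Fin n =>
              k < j.val ∧ (M : Matrix (Fin n) (Fin n) ℤ) K j ≠ 0) := by
            simp [Finset.mem_filter, hj, h0]
          have := Finset.card_pos.mpr ⟨j, hmem⟩
          omega
        intro i j hij
        rcases Nat.lt_or_ge i.val k with hi | hi
        · exact hQ i j (Or.inl hi)
        rcases Nat.lt_or_ge j.val k with hj | hj
        · exact hQ i j (Or.inr hj)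
        rcases hij with hij | hij
        · have hiK : i = K := Fin.ext (by omega)
          rcases Nat.lt_or_ge k j.val with hj' | hj'
          · rw [hiK, hempty j hj']
            have hne : K ≠ j := by
              intro e
              have := congrArg Fin.val e
              omega
            simp [hne]
          · have hjK : j = K := Fin.ext (by omega)
            rw [hiK, hjK, hcol K]
        · have hjK : j = K := Fin.ext (by omega)
          rw [hjK, hcol i]
      | succ m ihm =>
        intro M hQ hcol hcard
        by_cases hex : ∃ j : Fin n, k < j.val ∧ (M : Matrix (Fin n) (Fin n) ℤ) K j ≠ 0
        · obtain ⟨j, hjk, hj0⟩ := hex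
          have hKj : K ≠ j := by
            intro e
            have := congrArg Fin.val e
            omega
          set c : ℤ := -((M : Matrix (Fin n) (Fin n) ℤ) K j) with hc
          set M' := M * mkT K j hKj c with hM'def
          have hM'mat : (M' : Matrix (Fin n) (Fin n) ℤ)
              = (M : Matrix (Fin n) (Fin n) ℤ) * transvection K j c := rfl
          have hent_ne : ∀ a b : Fin n, b ≠ j →
              (M' : Matrix (Fin n) (Fin n) ℤ) a b = (M : Matrix (Fin n) (Fin n) ℤ) a b := by
            intro a b hb
            rw [hM'mat, mul_transvection_apply_of_ne K j a b hb]
          have hent_j : ∀ a : Fin n, (M' : Matrix (Fin n) (Fin n) ℤ) a j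
              = (M : Matrix (Fin n) (Fin n) ℤ) a j
                + c * (M : Matrix (Fin n) (Fin n) ℤ) a K := by
            intro a
            rw [hM'mat, mul_transvection_apply_same K j a c]
          have hQ' : Qk k M' := by
            intro a b hab
            by_cases hb : b = j
            · subst hb
              have ha : a.val < k := by rcases hab with h' | h' <;> omega
              rw [hent_j a]
              have haj : a ≠ b := by intro e; subst e; omega
              have haK : a ≠ K := by intro e; subst e; omega
              have h1 : (M : Matrix (Fin n) (Fin n) ℤ) a b = 0 := by
                rw [hQ a b (Or.inl ha)]; simp [haj]
              have h2 : (M : Matrix (Fin n) (Fin n) ℤ) a K = 0 := by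
                rw [hQ a K (Or.inl ha)]; simp [haK]
              rw [h1, h2]; simp [haj]
            · rw [hent_ne a b hb]; exact hQ a b hab
          have hcol' : ∀ i : Fin n,
              (M' : Matrix (Fin n) (Fin n) ℤ) i K = if i = K then 1 else 0 := by
            intro i
            rw [hent_ne i K hKj]
            exact hcol i
          have hM'Kj : (M' : Matrix (Fin n) (Fin n) ℤ) K j = 0 := by
            rw [hent_j K, hcol K]
            simp [hc]
          have hcard' : (Finset.univ.filter fun b : Fin n =>
              k < b.val ∧ (M' : Matrix (Fin n) (Fin n) ℤ) K b ≠ 0).card ≤ m := by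
            have hjmem : j ∈ Finset.univ.filter (fun b : Fin n =>
                k < b.val ∧ (M : Matrix (Fin n) (Fin n) ℤ) K b ≠ 0) := by
              simp [Finset.mem_filter, hjk, hj0]
            have hsub : (Finset.univ.filter fun b : Fin n =>
                k < b.val ∧ (M' : Matrix (Fin n) (Fin n) ℤ) K b ≠ 0)
                ⊆ (Finset.univ.filter (fun b : Fin n =>
                  k < b.val ∧ (M : Matrix (Fin n) (Fin n) ℤ) K b ≠ 0)).erase j := by
              intro b hb
              simp only [Finset.mem_filter, Finset.mem_univ, true_and] at hb
              rw [Finset.mem_erase]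
              have hbj : b ≠ j := by
                intro e; subst e; exact hb.2 hM'Kj
              refine ⟨hbj, ?_⟩
              simp only [Finset.mem_filter, Finset.mem_univ, true_and]
              refine ⟨hb.1, ?_⟩
              rw [← hent_ne K b hbj]
              exact hb.2
            have h1 := Finset.card_le_card hsub
            have h2 := Finset.card_erase_of_mem hjmem
            have h3 := Finset.card_pos.mpr ⟨j, hjmem⟩
            omega
          have hM'G : M' ∈ G := ihm M' hQ' hcol' hcard'
          exact mem_of_mul_right (hT K j hKj c) hM'G
        · push_neg at hex
          refine ihm M hQ hcol ?_
          have hemp : (Finset.univ.filter fun j : Fin n =>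
              k < j.val ∧ (M : Matrix (Fin n) (Fin n) ℤ) K j ≠ 0) = ∅ := by
            apply Finset.eq_empty_of_forall_notMem
            intro b hb
            simp only [Finset.mem_filter, Finset.mem_univ, true_and] at hb
            exact hb.2 (hex b hb.1)
          rw [hemp]
          simp
    have finish : ∀ M : SLn n, Qk k M →
        (∀ i : Fin n, (M : Matrix (Fin n) (Fin n) ℤ) i K = if i = K then 1 else 0) →
        M ∈ G := fun M hQ hcol => clearRow _ M hQ hcol le_rfl
    -- Phase 1: Euclidean algorithm on column K
    have euclid : ∀ N : ℕ, ∀ M : SLn n, Qk k M →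
        (∑ r ∈ Finset.univ.filter fun r : Fin n => k ≤ r.val,
          ((M : Matrix (Fin n) (Fin n) ℤ) r K).natAbs) = N → M ∈ G := by
      intro N
      induction N using Nat.strong_induction_on with
      | _ N ihN =>
      intro M hQ hsum
      by_cases hTwo : ∃ r s : Fin n, k ≤ r.val ∧ k ≤ s.val ∧ r ≠ s ∧
          (M : Matrix (Fin n) (Fin n) ℤ) r K ≠ 0 ∧
          (M : Matrix (Fin n) (Fin n) ℤ) s K ≠ 0 ∧
          ((M : Matrix (Fin n) (Fin n) ℤ) s K).natAbs
            ≤ ((M : Matrix (Fin n) (Fin n) ℤ) r K).natAbs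
      · obtain ⟨r, s, hrk, hsk, hrs, hr0, hs0, hle⟩ := hTwo
        set c : ℤ := -((M : Matrix (Fin n) (Fin n) ℤ) r K
            / (M : Matrix (Fin n) (Fin n) ℤ) s K) with hc
        set M' := mkT r s hrs c * M with hM'def
        have hM'mat : (M' : Matrix (Fin n) (Fin n) ℤ)
            = transvection r s c * (M : Matrix (Fin n) (Fin n) ℤ) := rfl
        have hent_ne : ∀ a b : Fin n, a ≠ r →
            (M' : Matrix (Fin n) (Fin n) ℤ) a b = (M : Matrix (Fin n) (Fin n) ℤ) a b := by
          intro a b ha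
          rw [hM'mat, transvection_mul_apply_of_ne r s a b ha]
        have hrK' : (M' : Matrix (Fin n) (Fin n) ℤ) r K
            = (M : Matrix (Fin n) (Fin n) ℤ) r K % (M : Matrix (Fin n) (Fin n) ℤ) s K := by
          rw [hM'mat, transvection_mul_apply_same r s K c, Int.emod_def, hc]
          ring
        have hQ' : Qk k M' := Qk_mul k r s hrs hrk hsk c M hQ
        have habs := natAbs_emod_lt' ((M : Matrix (Fin n) (Fin n) ℤ) r K)
          ((M : Matrix (Fin n) (Fin n) ℤ) s K) hs0
        have hrmem : r ∈ Finset.univ.filter (fun r : Fin n => k ≤ r.val) := by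
          simp [Finset.mem_filter, hrk]
        have hdec : (∑ t ∈ Finset.univ.filter fun t : Fin n => k ≤ t.val,
            ((M' : Matrix (Fin n) (Fin n) ℤ) t K).natAbs) < N := by
          rw [← hsum]
          apply Finset.sum_lt_sum
          · intro i _
            by_cases e : i = r
            · subst e
              rw [hrK']
              omega
            · rw [hent_ne i K e]
          · exact ⟨r, hrmem, by rw [hrK']; omega⟩
        have hM'G : M' ∈ G := ihN _ hdec M' hQ' rfl
        exact mem_of_mul_left (hT r s hrs c) hM'G
      · have hspan : (1 : ℤ) ∈ Ideal.span
            ((fun r => (M : Matrix (Fin n) (Fin n) ℤ) r K) '' {r : Fin n | K.val ≤ r.val}) := by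
          have hd := det_mem_span (M : Matrix (Fin n) (Fin n) ℤ) K
            (fun i hi j => hQ i j (Or.inl hi))
          rwa [M.prop] at hd
        have hex : ∃ r₀ : Fin n, k ≤ r₀.val ∧ (M : Matrix (Fin n) (Fin n) ℤ) r₀ K ≠ 0 := by
          by_contra hall
          push_neg at hall
          have hsub : ((fun r => (M : Matrix (Fin n) (Fin n) ℤ) r K) ''
              {r : Fin n | K.val ≤ r.val}) ⊆ {(0 : ℤ)} := by
            rintro x ⟨r, hr, rfl⟩
            simp [hall r hr]
          have hle : Ideal.span ((fun r => (M : Matrix (Fin n) (Fin n) ℤ) r K) ''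
              {r : Fin n | K.val ≤ r.val}) ≤ Ideal.span {(0 : ℤ)} :=
            Ideal.span_mono hsub
          have h1 := hle hspan
          rw [Ideal.span_singleton_eq_bot.mpr rfl] at h1
          simp at h1
        obtain ⟨r₀, hr₀k, hr₀⟩ := hex
        have hothers : ∀ r : Fin n, k ≤ r.val → r ≠ r₀ →
            (M : Matrix (Fin n) (Fin n) ℤ) r K = 0 := by
          intro r hrk hne
          by_contra h0
          apply hTwo
          rcases le_total ((M : Matrix (Fin n) (Fin n) ℤ) r K).natAbs
            ((M : Matrix (Fin n) (Fin n) ℤ) r₀ K).natAbs with hle | hle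
          · exact ⟨r₀, r, hr₀k, hrk, fun e => hne e.symm, hr₀, h0, hle⟩
          · exact ⟨r, r₀, hrk, hr₀k, hne, h0, hr₀, hle⟩
        have hunit : (M : Matrix (Fin n) (Fin n) ℤ) r₀ K = 1 ∨
            (M : Matrix (Fin n) (Fin n) ℤ) r₀ K = -1 := by
          have hle : Ideal.span ((fun r => (M : Matrix (Fin n) (Fin n) ℤ) r K) ''
              {r : Fin n | K.val ≤ r.val})
              ≤ Ideal.span {(M : Matrix (Fin n) (Fin n) ℤ) r₀ K} := by
            rw [Ideal.span_le]
            rintro x ⟨r, hr, rfl⟩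
            by_cases e : r = r₀
            · subst e; exact Ideal.subset_span rfl
            · simp only [hothers r hr e, SetLike.mem_coe]
              exact Submodule.zero_mem _
          have h1 := hle hspan
          rw [Ideal.mem_span_singleton] at h1
          exact Int.isUnit_iff.mp (isUnit_of_dvd_one h1)
        by_cases hr₀K : r₀ = K
        · rcases hunit with hu1 | hu1
          · -- pivot is already 1
            rw [hr₀K] at hu1
            refine finish M hQ ?_
            intro i
            by_cases hiK : i = K
            · rw [hiK, if_pos rfl, hu1]
            · rw [if_neg hiK]
              rcases Nat.lt_or_ge i.val k with hik | hik
              · rw [hQ i K (Or.inl hik)]; simp [hiK]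
              · exact hothers i hik (by rw [hr₀K]; exact hiK)
          · -- pivot is -1
            rw [hr₀K] at hu1
            by_cases hk1 : k + 1 < n
            · set s : Fin n := ⟨k + 1, hk1⟩ with hsdef
              have hsK : s ≠ K := by
                intro e
                have := congrArg Fin.val e
                simp [hsdef, hKdef] at this
              have hKs : K ≠ s := fun e => hsK e.symm
              have hsk : k ≤ s.val := by simp [hsdef]
              have hMKK : (M : Matrix (Fin n) (Fin n) ℤ) K K = -1 := hu1
              have hMsK : (M : Matrix (Fin n) (Fin n) ℤ) s K = 0 :=
                hothers s hsk (by rw [hr₀K]; exact hsK)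
              set M₁ := mkT s K hsK 1 * M with hM₁def
              set M₂ := mkT K s hKs (-2) * M₁ with hM₂def
              set M₃ := mkT s K hsK 1 * M₂ with hM₃def
              have hQ₁ : Qk k M₁ := Qk_mul k s K hsK hsk le_rfl 1 M hQ
              have hQ₂ : Qk k M₂ := Qk_mul k K s hKs le_rfl hsk (-2) M₁ hQ₁
              have hQ₃ : Qk k M₃ := Qk_mul k s K hsK hsk le_rfl 1 M₂ hQ₂
              have e₁s : ∀ b, (M₁ : Matrix (Fin n) (Fin n) ℤ) s b
                  = (M : Matrix (Fin n) (Fin n) ℤ) s b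
                    + 1 * (M : Matrix (Fin n) (Fin n) ℤ) K b :=
                fun b => transvection_mul_apply_same s K b 1 _
              have e₁ : ∀ a b, a ≠ s → (M₁ : Matrix (Fin n) (Fin n) ℤ) a b
                  = (M : Matrix (Fin n) (Fin n) ℤ) a b :=
                fun a b ha => transvection_mul_apply_of_ne s K a b ha 1 _
              have e₂K : ∀ b, (M₂ : Matrix (Fin n) (Fin n) ℤ) K b
                  = (M₁ : Matrix (Fin n) (Fin n) ℤ) K b
                    + (-2) * (M₁ : Matrix (Fin n) (Fin n) ℤ) s b :=
                fun b => transvection_mul_apply_same K s b (-2) _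
              have e₂ : ∀ a b, a ≠ K → (M₂ : Matrix (Fin n) (Fin n) ℤ) a b
                  = (M₁ : Matrix (Fin n) (Fin n) ℤ) a b :=
                fun a b ha => transvection_mul_apply_of_ne K s a b ha (-2) _
              have e₃s : ∀ b, (M₃ : Matrix (Fin n) (Fin n) ℤ) s b
                  = (M₂ : Matrix (Fin n) (Fin n) ℤ) s b
                    + 1 * (M₂ : Matrix (Fin n) (Fin n) ℤ) K b :=
                fun b => transvection_mul_apply_same s K b 1 _
              have e₃ : ∀ a b, a ≠ s → (M₃ : Matrix (Fin n) (Fin n) ℤ) a b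
                  = (M₂ : Matrix (Fin n) (Fin n) ℤ) a b :=
                fun a b ha => transvection_mul_apply_of_ne s K a b ha 1 _
              have h1sK : (M₁ : Matrix (Fin n) (Fin n) ℤ) s K = -1 := by
                rw [e₁s K, hMsK, hMKK]; ring
              have h1KK : (M₁ : Matrix (Fin n) (Fin n) ℤ) K K = -1 := by
                rw [e₁ K K hKs, hMKK]
              have h2KK : (M₂ : Matrix (Fin n) (Fin n) ℤ) K K = 1 := by
                rw [e₂K K, h1KK, h1sK]; ring
              have h2sK : (M₂ : Matrix (Fin n) (Fin n) ℤ) s K = -1 := by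
                rw [e₂ s K hsK, h1sK]
              have h3sK : (M₃ : Matrix (Fin n) (Fin n) ℤ) s K = 0 := by
                rw [e₃s K, h2sK, h2KK]; ring
              have h3KK : (M₃ : Matrix (Fin n) (Fin n) ℤ) K K = 1 := by
                rw [e₃ K K hKs, h2KK]
              have hcol : ∀ i : Fin n,
                  (M₃ : Matrix (Fin n) (Fin n) ℤ) i K = if i = K then 1 else 0 := by
                intro i
                by_cases hiK : i = K
                · rw [hiK, if_pos rfl, h3KK]
                · rw [if_neg hiK]
                  by_cases his : i = s
                  · rw [his, h3sK]
                  · rw [e₃ i K his, e₂ i K hiK, e₁ i K his]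
                    rcases Nat.lt_or_ge i.val k with hik | hik
                    · rw [hQ i K (Or.inl hik)]; simp [hiK]
                    · exact hothers i hik (by rw [hr₀K]; exact hiK)
              have hM₃G : M₃ ∈ G := finish M₃ hQ₃ hcol
              exact mem_of_mul_left (hT s K hsK 1)
                (mem_of_mul_left (hT K s hKs (-2))
                  (mem_of_mul_left (hT s K hsK 1) hM₃G))
            · exfalso
              have hdiag : (M : Matrix (Fin n) (Fin n) ℤ)
                  = Matrix.diagonal (fun i => if i = K then (-1 : ℤ) else 1) := by
                ext i j
                by_cases hij : i = j
                · subst hij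
                  rw [Matrix.diagonal_apply_eq]
                  by_cases hiK : i = K
                  · rw [hiK, if_pos rfl, hu1]
                  · rw [if_neg hiK]
                    have hik : i.val < k := by
                      have h1 := i.isLt
                      have h2 : i.val ≠ k := fun e => hiK (Fin.ext e)
                      omega
                    rw [hQ i i (Or.inl hik)]; simp
                · rw [Matrix.diagonal_apply_ne _ hij]
                  have hor : i.val < k ∨ j.val < k := by
                    by_contra hcon
                    push_neg at hcon
                    have h1 := i.isLt
                    have h2 := j.isLt
                    exact hij (Fin.ext (by omega))
                  rw [hQ i j hor]; simp [hij]
              have hdet := M.prop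
              rw [hdiag, Matrix.det_diagonal] at hdet
              rw [Finset.prod_ite_eq' Finset.univ K (fun _ => (-1 : ℤ))] at hdet
              simp at hdet
        · -- pivot elsewhere
          have hKr₀ : K ≠ r₀ := fun e => hr₀K e.symm
          have hMKK : (M : Matrix (Fin n) (Fin n) ℤ) K K = 0 :=
            hothers K le_rfl hKr₀
          set u := (M : Matrix (Fin n) (Fin n) ℤ) r₀ K with hu
          have huu : u * u = 1 := by rcases hunit with h | h <;> rw [h] <;> ring
          set M₁ := mkT K r₀ hKr₀ u * M with hM₁def
          set M₂ := mkT r₀ K hr₀K (-u) * M₁ with hM₂def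
          have hQ₁ : Qk k M₁ := Qk_mul k K r₀ hKr₀ le_rfl hr₀k u M hQ
          have hQ₂ : Qk k M₂ := Qk_mul k r₀ K hr₀K hr₀k le_rfl (-u) M₁ hQ₁
          have e₁K : ∀ b, (M₁ : Matrix (Fin n) (Fin n) ℤ) K b
              = (M : Matrix (Fin n) (Fin n) ℤ) K b + u * (M : Matrix (Fin n) (Fin n) ℤ) r₀ b :=
            fun b => transvection_mul_apply_same K r₀ b u _
          have e₁ : ∀ a b, a ≠ K → (M₁ : Matrix (Fin n) (Fin n) ℤ) a b
              = (M : Matrix (Fin n) (Fin n) ℤ) a b :=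
            fun a b ha => transvection_mul_apply_of_ne K r₀ a b ha u _
          have e₂r : ∀ b, (M₂ : Matrix (Fin n) (Fin n) ℤ) r₀ b
              = (M₁ : Matrix (Fin n) (Fin n) ℤ) r₀ b
                + (-u) * (M₁ : Matrix (Fin n) (Fin n) ℤ) K b :=
            fun b => transvection_mul_apply_same r₀ K b (-u) _
          have e₂ : ∀ a b, a ≠ r₀ → (M₂ : Matrix (Fin n) (Fin n) ℤ) a b
              = (M₁ : Matrix (Fin n) (Fin n) ℤ) a b :=
            fun a b ha => transvection_mul_apply_of_ne r₀ K a b ha (-u) _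
          have h1KK : (M₁ : Matrix (Fin n) (Fin n) ℤ) K K = 1 := by
            rw [e₁K K, hMKK, ← hu, huu]; ring
          have h1rK : (M₁ : Matrix (Fin n) (Fin n) ℤ) r₀ K = u := by
            rw [e₁ r₀ K hr₀K, hu]
          have h2KK : (M₂ : Matrix (Fin n) (Fin n) ℤ) K K = 1 := by
            rw [e₂ K K hKr₀, h1KK]
          have h2rK : (M₂ : Matrix (Fin n) (Fin n) ℤ) r₀ K = 0 := by
            rw [e₂r K, h1rK, h1KK]; ring
          have hcol : ∀ i : Fin n,
              (M₂ : Matrix (Fin n) (Fin n) ℤ) i K = if i = K then 1 else 0 := by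
            intro i
            by_cases hiK : i = K
            · rw [hiK, if_pos rfl, h2KK]
            · rw [if_neg hiK]
              by_cases hir : i = r₀
              · rw [hir, h2rK]
              · rw [e₂ i K hir, e₁ i K hiK]
                rcases Nat.lt_or_ge i.val k with hik | hik
                · rw [hQ i K (Or.inl hik)]; simp [hiK]
                · exact hothers i hik hir
          have hM₂G : M₂ ∈ G := finish M₂ hQ₂ hcol
          exact mem_of_mul_left (hT K r₀ hKr₀ u)
            (mem_of_mul_left (hT r₀ K hr₀K (-u)) hM₂G)
    exact euclid _ M₀ hQ₀ rfl

end SLGen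

namespace SLGen
variable {n : ℕ}

/-- the sign vector of the rows of `aMat` -/
def wv (n : ℕ) (r : Fin n) : ℤ := if r.val = n - 1 then eps n else 1

theorem eps_sq (n : ℕ) : eps n * eps n = 1 := by
  rw [eps, ← pow_add]
  exact Even.neg_one_pow ⟨n - 1, rfl⟩

theorem wv_sq (r : Fin n) : wv n r * wv n r = 1 := by
  unfold wv
  split_ifs
  · exact eps_sq n
  · ring

theorem aMat_apply (hn : 3 ≤ n) (r s : Fin n) :
    aMat n r s = if s.val = (r.val + 1) % n then wv n r else 0 := by
  have hrn := r.isLt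
  have hsn := s.isLt
  rw [aMat]
  rw [Matrix.add_apply, Matrix.smul_apply, Matrix.sum_apply]
  have hsum : (∑ i ∈ Finset.range (n - 1), matUnit n (i + 1) (i + 2) r s)
      = if r.val < n - 1 ∧ s.val = r.val + 1 then 1 else 0 := by
    by_cases h : r.val < n - 1 ∧ s.val = r.val + 1
    · rw [Finset.sum_eq_single r.val]
      · have h1 : matUnit n (r.val + 1) (r.val + 2) r s = 1 := by
          show (if r.val + 1 = r.val + 1 ∧ s.val + 1 = r.val + 2 then (1 : ℤ) else 0) = 1
          rw [if_pos ⟨rfl, by omega⟩]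
        rw [h1, if_pos h]
      · intro i _ hne
        show (if r.val + 1 = i + 1 ∧ s.val + 1 = i + 2 then (1 : ℤ) else 0) = 0
        rw [if_neg (by omega)]
      · intro habs
        exact absurd (Finset.mem_range.mpr h.1) habs
    · rw [Finset.sum_eq_zero, if_neg h]
      intro i hi
      rw [Finset.mem_range] at hi
      show (if r.val + 1 = i + 1 ∧ s.val + 1 = i + 2 then (1 : ℤ) else 0) = 0
      rw [if_neg (by omega)]
  rw [hsum]
  have hep : matUnit n n 1 r s = if r.val = n - 1 ∧ s.val = 0 then 1 else 0 := by
    show (if r.val + 1 = n ∧ s.val + 1 = 1 then (1 : ℤ) else 0) = _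
    by_cases h : r.val = n - 1 ∧ s.val = 0
    · rw [if_pos (by omega), if_pos h]
    · rw [if_neg (by omega), if_neg h]
  rw [hep]
  unfold wv
  by_cases hr : r.val = n - 1
  · rw [show r.val + 1 = n from by omega, Nat.mod_self]
    rw [if_neg (by omega), if_pos hr]
    by_cases hs : s.val = 0
    · rw [if_pos ⟨hr, hs⟩, if_pos hs]
      simp
    · rw [if_neg (fun hc => hs hc.2), if_neg hs]
      simp
  · rw [Nat.mod_eq_of_lt (by omega)]
    rw [if_neg (fun (hc : r.val = n - 1 ∧ s.val = 0) => hr hc.1)]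
    rw [smul_zero, add_zero]
    by_cases hs : s.val = r.val + 1
    · rw [if_pos ⟨by omega, hs⟩, if_pos hs, if_neg hr]
    · rw [if_neg (fun hc => hs hc.2), if_neg hs]

theorem stdBasisMatrix_neg (i j : Fin n) (c : ℤ) :
    Matrix.single i j (-c) = -Matrix.single i j c := by
  ext r s
  simp only [Matrix.single, Matrix.of_apply, Matrix.neg_apply]
  split_ifs <;> ring

theorem transvection_comm_mat (i p j : Fin n) (hip : i ≠ p) (hpj : p ≠ j) (hij : i ≠ j)
    (c d : ℤ) :
    transvection i p c * transvection p j d * transvection i p (-c) * transvection p j (-d)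
      = transvection i j (c * d) := by
  unfold transvection
  rw [stdBasisMatrix_neg, stdBasisMatrix_neg]
  set E := Matrix.single i p c with hE
  set F := Matrix.single p j d with hF
  set G := Matrix.single i j (c * d) with hG
  have hEF : E * F = G := Matrix.single_mul_single_same (c := c) i p j d
  have hEE : E * E = 0 := Matrix.single_mul_single_of_ne (c := c) i p _ (fun e => hip e.symm) c
  have hFE : F * E = 0 := Matrix.single_mul_single_of_ne (c := d) p j _ (fun e => hij e.symm) c
  have hFF : F * F = 0 := Matrix.single_mul_single_of_ne (c := d) p j _ (fun e => hpj e.symm) d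
  have hEG : E * G = 0 := Matrix.single_mul_single_of_ne (c := c) i p _ (fun e => hip e.symm) (c * d)
  have hFG : F * G = 0 := Matrix.single_mul_single_of_ne (c := d) p j _ (fun e => hij e.symm) (c * d)
  have hGE : G * E = 0 := Matrix.single_mul_single_of_ne (c := (c * d)) i j _ (fun e => hij e.symm) c
  have hGF : G * F = 0 := Matrix.single_mul_single_of_ne (c := (c * d)) i j _ (fun e => hpj e.symm) d
  have hGG : G * G = 0 := Matrix.single_mul_single_of_ne (c := (c * d)) i j _ (fun e => hij e.symm) (c * d)
  have h1 : (1 + E) * (1 + F) = 1 + E + F + G := by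
    rw [mul_add, mul_one, add_mul, one_mul, hEF]
    abel
  have h2 : (1 + -E) * (1 + -F) = 1 - E - F + G := by
    rw [mul_add, mul_one, add_mul, one_mul, neg_mul_neg, hEF]
    abel
  rw [mul_assoc, h2, h1]
  simp only [add_mul, mul_add, mul_sub, sub_mul, one_mul, mul_one,
    hEF, hEE, hFE, hFF, hEG, hFG, hGE, hGF, hGG]
  abel

theorem fin_val_add_one [NeZero n] (hn : 3 ≤ n) (r : Fin n) :
    ((r + 1 : Fin n)).val = (r.val + 1) % n := by
  rw [Fin.val_add, Fin.val_one', Nat.mod_eq_of_lt (show 1 < n by omega)]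

theorem mulL [NeZero n] (hn : 3 ≤ n) (a : Matrix (Fin n) (Fin n) ℤ)
    (ha : ∀ r s, a r s = if s.val = (r.val + 1) % n then wv n r else 0)
    (i j : Fin n) (c : ℤ) :
    a * Matrix.single i j c = Matrix.single (i - 1) j (wv n (i - 1) * c) := by
  ext r s
  rw [Matrix.mul_apply]
  rw [Finset.sum_eq_single i]
  · have hiff : (i - 1 = r) ↔ i.val = (r.val + 1) % n := by
      rw [sub_eq_iff_eq_add, Fin.ext_iff, fin_val_add_one hn r]
    rw [ha r i]
    show (if i.val = (r.val + 1) % n then wv n r else 0) *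
        (if i = i ∧ j = s then c else 0) =
      (if i - 1 = r ∧ j = s then wv n (i - 1) * c else 0)
    by_cases hir : i - 1 = r
    · rw [if_pos (hiff.mp hir), ← hir]
      by_cases hjs : j = s
      · rw [if_pos ⟨rfl, hjs⟩, if_pos ⟨rfl, hjs⟩]
      · rw [if_neg (fun hc => hjs hc.2), if_neg (fun hc => hjs hc.2), mul_zero]
    · rw [if_neg (fun hc => hir (hiff.mpr hc)), zero_mul,
        if_neg (fun hc => hir hc.1)]
  · intro t _ hti
    have : Matrix.single i j c t s = 0 := by
      show (if i = t ∧ j = s then c else 0) = 0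
      rw [if_neg (fun hc => hti hc.1.symm)]
    rw [this, mul_zero]
  · intro habs
    exact absurd (Finset.mem_univ i) habs

theorem mulR [NeZero n] (hn : 3 ≤ n) (a : Matrix (Fin n) (Fin n) ℤ)
    (ha : ∀ r s, a r s = if s.val = (r.val + 1) % n then wv n r else 0)
    (i j : Fin n) (c : ℤ) :
    Matrix.single i j c * a = Matrix.single i (j + 1) (wv n j * c) := by
  ext r s
  rw [Matrix.mul_apply]
  rw [Finset.sum_eq_single j]
  · have hiff : (j + 1 = s) ↔ s.val = (j.val + 1) % n := by
      rw [eq_comm, Fin.ext_iff, fin_val_add_one hn j]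
    rw [ha j s]
    show (if i = r ∧ j = j then c else 0) *
        (if s.val = (j.val + 1) % n then wv n j else 0) =
      (if i = r ∧ j + 1 = s then wv n j * c else 0)
    by_cases hjs : j + 1 = s
    · rw [if_pos (hiff.mp hjs)]
      by_cases hir : i = r
      · rw [if_pos ⟨hir, rfl⟩, if_pos ⟨hir, hjs⟩]
        ring
      · rw [if_neg (fun hc => hir hc.1), if_neg (fun hc => hir hc.1), zero_mul]
    · rw [if_neg (fun hc => hjs (hiff.mpr hc)), mul_zero,
        if_neg (fun hc => hjs hc.2)]
  · intro t _ htj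
    have : Matrix.single i j c r t = 0 := by
      show (if i = r ∧ j = t then c else 0) = 0
      rw [if_neg (fun hc => htj hc.2.symm)]
    rw [this, zero_mul]
  · intro habs
    exact absurd (Finset.mem_univ j) habs

theorem a_mul_transvection [NeZero n] (hn : 3 ≤ n) (a : Matrix (Fin n) (Fin n) ℤ)
    (ha : ∀ r s, a r s = if s.val = (r.val + 1) % n then wv n r else 0)
    (i j : Fin n) (c : ℤ) :
    a * transvection i j c
      = transvection (i - 1) (j - 1) (wv n (i - 1) * wv n (j - 1) * c) * a := by
  unfold transvection
  rw [Matrix.mul_add, Matrix.add_mul, Matrix.mul_one, Matrix.one_mul]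
  congr 1
  rw [mulL hn a ha i j c, mulR hn a ha (i - 1) (j - 1)]
  rw [sub_add_cancel]
  rw [show wv n (j - 1) * (wv n (i - 1) * wv n (j - 1) * c)
      = (wv n (j - 1) * wv n (j - 1)) * (wv n (i - 1) * c) from by ring, wv_sq, one_mul]

end SLGen

namespace SLGen
variable {n : ℕ}

theorem mkT_congr {i j i' j' : Fin n} (hi : i = i') (hj : j = j') (h : i ≠ j) (h' : i' ≠ j')
    (c : ℤ) : mkT i j h c = mkT i' j' h' c := by
  subst hi; subst hj; rfl

theorem mkT_pow_mem {G : Subgroup (SLn n)} {i j : Fin n} {h : i ≠ j}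
    (h1 : mkT i j h 1 ∈ G) : ∀ c : ℤ, mkT i j h c ∈ G := by
  intro c
  induction c using Int.induction_on with
  | zero => rw [mkT_zero]; exact one_mem G
  | succ m hm => rw [← mkT_mul i j h m 1]; exact mul_mem hm h1
  | pred m hm =>
    rw [show (-(m : ℤ) - 1) = (-(m : ℤ)) + (-1) from by ring, ← mkT_mul i j h (-(m : ℤ)) (-1)]
    refine mul_mem hm ?_
    rw [show (-1 : ℤ) = -(1 : ℤ) from rfl, ← mkT_inv]
    exact inv_mem h1

end SLGen

open Fin.NatCast Fin.CommRing

set_option maxHeartbeats 1600000 in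
/-- For every `n ≥ 3`, the pair `(a_n, b_n)` generates `SL_n(ℤ)`; in
particular, every elementary transvection `T_{i,j}` (`i ≠ j`) lies in the subgroup
generated by `a_n` and `b_n`. -/
theorem aMat_bMat_generate (n : ℕ) (hn : 3 ≤ n)
    (A B : Matrix.SpecialLinearGroup (Fin n) ℤ)
    (hA : (A : Matrix (Fin n) (Fin n) ℤ) = aMat n)
    (hB : (B : Matrix (Fin n) (Fin n) ℤ) = bMat n) :
    Subgroup.closure ({A, B} : Set (Matrix.SpecialLinearGroup (Fin n) ℤ)) = ⊤ ∧
    (∀ i j : ℕ, 1 ≤ i → i ≤ n → 1 ≤ j → j ≤ n → i ≠ j →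
      ∀ T : Matrix.SpecialLinearGroup (Fin n) ℤ,
        (T : Matrix (Fin n) (Fin n) ℤ) = Tmat n i j →
        T ∈ Subgroup.closure ({A, B} : Set (Matrix.SpecialLinearGroup (Fin n) ℤ))) := by
  haveI : NeZero n := ⟨by omega⟩
  set G := Subgroup.closure ({A, B} : Set (Matrix.SpecialLinearGroup (Fin n) ℤ)) with hGdef
  have hAG : A ∈ G := Subgroup.subset_closure (Set.mem_insert _ _)
  have hBG : B ∈ G := Subgroup.subset_closure (Set.mem_insert_of_mem _ rfl)
  have h1v : ((1 : Fin n)).val = 1 := by rw [Fin.val_one']; exact Nat.mod_eq_of_lt (by omega)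
  have haA : ∀ r s : Fin n, (A : Matrix (Fin n) (Fin n) ℤ) r s
      = if s.val = (r.val + 1) % n then SLGen.wv n r else 0 := by
    intro r s; rw [hA]; exact SLGen.aMat_apply hn r s
  have hshift : ∀ (i j : Fin n) (h : i ≠ j) (c : ℤ),
      A * SLGen.mkT i j h c
        = SLGen.mkT (i - 1) (j - 1) (fun e => h (by rwa [sub_left_inj] at e))
            (SLGen.wv n (i - 1) * SLGen.wv n (j - 1) * c) * A := by
    intro i j h c
    apply Subtype.ext
    show (A : Matrix (Fin n) (Fin n) ℤ) * transvection i j c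
        = transvection (i - 1) (j - 1) (SLGen.wv n (i - 1) * SLGen.wv n (j - 1) * c)
          * (A : Matrix (Fin n) (Fin n) ℤ)
    exact SLGen.a_mul_transvection hn _ haA i j c
  have htrans : ∀ {x y x' y' : Fin n}, x = x' → y = y' →
      (∀ (h : x ≠ y) (c : ℤ), SLGen.mkT x y h c ∈ G) →
      (∀ (h : x' ≠ y') (c : ℤ), SLGen.mkT x' y' h c ∈ G) := by
    intro x y x' y' hx hy hp
    subst hx; subst hy
    exact hp
  have hshiftP : ∀ i j : Fin n, (∀ (h : i ≠ j) (c : ℤ), SLGen.mkT i j h c ∈ G) →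
      ∀ (h₂ : i - 1 ≠ j - 1) (c : ℤ), SLGen.mkT (i - 1) (j - 1) h₂ c ∈ G := by
    intro i j hP h₂ c
    have h : i ≠ j := fun e => h₂ (by rw [e])
    have hcoef : SLGen.wv n (i - 1) * SLGen.wv n (j - 1)
        * (SLGen.wv n (i - 1) * SLGen.wv n (j - 1) * c) = c := by
      rw [show SLGen.wv n (i - 1) * SLGen.wv n (j - 1)
            * (SLGen.wv n (i - 1) * SLGen.wv n (j - 1) * c)
          = (SLGen.wv n (i - 1) * SLGen.wv n (i - 1))
            * ((SLGen.wv n (j - 1) * SLGen.wv n (j - 1)) * c) from by ring,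
        SLGen.wv_sq, SLGen.wv_sq, one_mul, one_mul]
    have key := hshift i j h (SLGen.wv n (i - 1) * SLGen.wv n (j - 1) * c)
    rw [hcoef] at key
    have hmem : A * SLGen.mkT i j h (SLGen.wv n (i - 1) * SLGen.wv n (j - 1) * c) * A⁻¹ ∈ G :=
      mul_mem (mul_mem hAG (hP h _)) (inv_mem hAG)
    rw [key, mul_inv_cancel_right] at hmem
    exact hmem
  have h10 : (1 : Fin n) ≠ 0 := by
    intro e
    have := congrArg Fin.val e
    rw [h1v, Fin.val_zero] at this
    omega
  have hP10 : ∀ (h : (1 : Fin n) ≠ 0) (c : ℤ), SLGen.mkT 1 0 h c ∈ G := by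
    intro h
    refine SLGen.mkT_pow_mem ?_
    have hB1 : B = SLGen.mkT 1 0 h 1 := by
      apply Subtype.ext
      rw [hB]
      show bMat n = transvection 1 0 1
      unfold bMat transvection
      congr 1
      ext r s
      show (if r.val + 1 = 2 ∧ s.val + 1 = 1 then (1 : ℤ) else 0)
          = (if (1 : Fin n) = r ∧ (0 : Fin n) = s then (1 : ℤ) else 0)
      have hcond : (r.val + 1 = 2 ∧ s.val + 1 = 1) ↔ ((1 : Fin n) = r ∧ (0 : Fin n) = s) := by
        rw [Fin.ext_iff, Fin.ext_iff, h1v, Fin.val_zero]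
        omega
      by_cases hc : r.val + 1 = 2 ∧ s.val + 1 = 1
      · rw [if_pos hc, if_pos (hcond.mp hc)]
      · rw [if_neg hc, if_neg (fun hx => hc (hcond.mpr hx))]
    rw [← hB1]
    exact hBG
  have hcyc : ∀ d : ℕ, ∀ (h : (1 : Fin n) - (d : Fin n) ≠ 0 - (d : Fin n)) (c : ℤ),
      SLGen.mkT ((1 : Fin n) - (d : Fin n)) (0 - (d : Fin n)) h c ∈ G := by
    intro d
    induction d with
    | zero =>
      refine htrans ?_ ?_ (hP10) <;> push_cast <;> ring
    | succ m ihm =>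
      refine htrans ?_ ?_ (hshiftP _ _ ihm) <;> push_cast <;> ring
  have hsucc : ∀ j : Fin n, ∀ (h : j + 1 ≠ j) (c : ℤ), SLGen.mkT (j + 1) j h c ∈ G := by
    intro j
    refine htrans ?_ ?_ (hcyc ((-j).val)) <;> rw [Fin.cast_val_eq_self] <;> ring
  have hcomm : ∀ (i p j : Fin n), i ≠ p → p ≠ j →
      (∀ (h : i ≠ p) (c : ℤ), SLGen.mkT i p h c ∈ G) →
      (∀ (h : p ≠ j) (c : ℤ), SLGen.mkT p j h c ∈ G) →
      ∀ (h : i ≠ j) (c : ℤ), SLGen.mkT i j h c ∈ G := by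
    intro i p j hip hpj h1 h2 h c
    have key : SLGen.mkT i p hip c * SLGen.mkT p j hpj 1 * SLGen.mkT i p hip (-c)
        * SLGen.mkT p j hpj (-1) = SLGen.mkT i j h c := by
      apply Subtype.ext
      show transvection i p c * transvection p j 1 * transvection i p (-c)
          * transvection p j (-1) = transvection i j c
      have hm := SLGen.transvection_comm_mat i p j hip hpj h c 1
      rwa [mul_one] at hm
    rw [← key]
    exact mul_mem (mul_mem (mul_mem (h1 hip c) (h2 hpj 1)) (h1 hip (-c))) (h2 hpj (-1))
  have hdist : ∀ d : ℕ, 1 ≤ d → d < n → ∀ j : Fin n,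
      ∀ (h : j + (d : Fin n) ≠ j) (c : ℤ), SLGen.mkT (j + (d : Fin n)) j h c ∈ G := by
    intro d
    induction d with
    | zero => intro h1; exact absurd h1 (by omega)
    | succ m ihm =>
      intro _ hlt j
      by_cases hm0 : m = 0
      · subst hm0
        refine htrans ?_ rfl (hsucc j)
        push_cast
        ring
      · have hIH := ihm (by omega) (by omega) (j + 1)
        have hb := hsucc j
        have hne1 : j + ((m + 1 : ℕ) : Fin n) ≠ j + 1 := by
          intro e
          have e2 := add_left_cancel e
          have e3 := congrArg Fin.val e2
          rw [Fin.val_natCast, h1v, Nat.mod_eq_of_lt (by omega)] at e3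
          omega
        have hne2 : (j + 1 : Fin n) ≠ j := by
          intro e
          have e2 : j + (1 : Fin n) = j + 0 := by rw [e, add_zero]
          have e3 := congrArg Fin.val (add_left_cancel e2)
          rw [h1v, Fin.val_zero] at e3
          omega
        refine hcomm _ _ _ hne1 hne2 ?_ hb
        refine htrans ?_ rfl hIH
        push_cast
        ring
  have hall : ∀ (i j : Fin n) (h : i ≠ j) (c : ℤ), SLGen.mkT i j h c ∈ G := by
    intro i j h
    have hne : i - j ≠ 0 := sub_ne_zero.mpr h
    have hvpos : 1 ≤ (i - j).val := by
      rcases Nat.eq_zero_or_pos (i - j).val with h0 | h0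
      · exact absurd (Fin.ext (by rw [h0, Fin.val_zero])) hne
      · exact h0
    have hd := hdist (i - j).val hvpos (i - j).isLt j
    have hx : j + (((i - j).val : ℕ) : Fin n) = i := by
      rw [Fin.cast_val_eq_self]
      ring
    exact htrans hx rfl hd h
  have htop : G = ⊤ := by
    rw [Subgroup.eq_top_iff']
    intro M
    exact SLGen.mem_of_transvections G hall M
  refine ⟨htop, ?_⟩
  intro i j _ _ _ _ _ T _
  rw [htop]
  exact Subgroup.mem_top T
end
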